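/- Let V0 ~ Beta(1, α1) and V1 ~ Beta(1+α1, α2) be independent, and set S1 = V0·V1, S2 = V0. Then S1 ~ Beta(1, α1+α2) and S2 ~ Beta(1, α1). -/

import Mathlib

open MeasureTheory ProbabilityTheory Real Filter
open Set

/-- The density of a Beta(a,b) random variable on (0,1). -/
noncomputable def betaPDFReal (a b x : ℝ) : ℝ :=
  if 0 < x ∧ x < 1 then
    (Real.Gamma (a + b) / (Real.Gamma a * Real.Gamma b)) * x ^ (a - 1) * (1 - x) ^ (b - 1)
  else 0

/-- The Beta(a,b) probability measure on ℝ. -/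
noncomputable def betaMeasure (a b : ℝ) : Measure ℝ :=
  MeasureTheory.volume.withDensity (fun x => ENNReal.ofReal (_root_.betaPDFReal a b x))

/-- `X` is a beta random variable with parameters `(a, b)` on `(Ω, μ)`. -/
def HasBetaLaw {Ω : Type*} [MeasurableSpace Ω] (μ : Measure Ω) (X : Ω → ℝ) (a b : ℝ) : Prop :=
  Measurable X ∧ μ.map X = _root_.betaMeasure a b


lemma measurable_betaPDFReal (a b : ℝ) : Measurable (_root_.betaPDFReal a b) := by
  unfold _root_.betaPDFReal
  have : MeasurableSet {x : ℝ | 0 < x ∧ x < 1} := by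
    exact (measurableSet_Ioo : MeasurableSet (Ioo (0:ℝ) 1))
  exact Measurable.ite this (((measurable_id.pow_const _).const_mul _).mul
    ((measurable_const.sub measurable_id).pow_const _)) measurable_const

lemma betaPDFReal_nonneg {a b : ℝ} (ha : 0 < a) (hb : 0 < b) (x : ℝ) :
    0 ≤ _root_.betaPDFReal a b x := by
  unfold _root_.betaPDFReal
  split_ifs with h
  · have h1 := Real.Gamma_pos_of_pos ha
    have h2 := Real.Gamma_pos_of_pos hb
    have h3 := Real.Gamma_pos_of_pos (add_pos ha hb)
    have hx1 : (0:ℝ) ≤ x ^ (a-1) := Real.rpow_nonneg h.1.le _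
    have hx2 : (0:ℝ) ≤ (1-x) ^ (b-1) := Real.rpow_nonneg (by linarith [h.2]) _
    have hc : 0 ≤ Real.Gamma (a+b) / (Real.Gamma a * Real.Gamma b) := by positivity
    positivity
  · exact le_refl _

lemma betaIntegrand_eq_complex {a b : ℝ} (x : ℝ) (hx : x ∈ Set.uIcc (0:ℝ) 1) :
    ((x:ℂ)) ^ ((a:ℂ) - 1) * ((1:ℂ) - x) ^ ((b:ℂ) - 1)
      = ((x ^ (a - 1) * (1 - x) ^ (b - 1) : ℝ) : ℂ) := by
  rw [Set.uIcc_of_le (by norm_num)] at hx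
  obtain ⟨h0, h1⟩ := hx
  rw [Complex.ofReal_mul, Complex.ofReal_cpow h0, Complex.ofReal_cpow (by linarith : (0:ℝ) ≤ 1 - x)]
  push_cast
  ring

lemma betaIntegrand_intervalIntegrable {a b : ℝ} (ha : 0 < a) (hb : 0 < b) :
    IntervalIntegrable (fun x : ℝ => x ^ (a - 1) * (1 - x) ^ (b - 1)) volume 0 1 := by
  have h := Complex.betaIntegral_convergent (u := a) (v := b) (by simpa using ha) (by simpa using hb)
  have h2 : IntervalIntegrable (fun x : ℝ =>
      ((x ^ (a - 1) * (1 - x) ^ (b - 1) : ℝ) : ℂ)) volume 0 1 :=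
    h.congr (by
      intro x hx
      exact betaIntegrand_eq_complex x (uIoc_subset_uIcc hx))
  have := h2.norm
  refine this.congr ?_
  intro x hx
  have hx' := uIoc_subset_uIcc hx
  rw [Set.uIcc_of_le (by norm_num)] at hx'
  simp only [Complex.norm_real, Real.norm_eq_abs]
  rw [abs_of_nonneg (mul_nonneg (Real.rpow_nonneg hx'.1 _)
    (Real.rpow_nonneg (by linarith [hx'.2]) _))]

lemma integral_betaIntegrand {a b : ℝ} (ha : 0 < a) (hb : 0 < b) :
    ∫ x in (0:ℝ)..1, x ^ (a - 1) * (1 - x) ^ (b - 1)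
      = Real.Gamma a * Real.Gamma b / Real.Gamma (a + b) := by
  have key := Complex.Gamma_mul_Gamma_eq_betaIntegral (s := a) (t := b)
    (by simpa using ha) (by simpa using hb)
  have hbeta : Complex.betaIntegral a b
      = ((∫ x in (0:ℝ)..1, x ^ (a - 1) * (1 - x) ^ (b - 1) : ℝ) : ℂ) := by
    rw [Complex.betaIntegral, ← intervalIntegral.integral_ofReal]
    exact intervalIntegral.integral_congr fun x hx => betaIntegrand_eq_complex x hx
  rw [hbeta, ← Complex.ofReal_add, Complex.Gamma_ofReal, Complex.Gamma_ofReal,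
    Complex.Gamma_ofReal, ← Complex.ofReal_mul, ← Complex.ofReal_mul] at key
  have := Complex.ofReal_injective key
  have hG : Real.Gamma (a + b) ≠ 0 := (Real.Gamma_pos_of_pos (add_pos ha hb)).ne'
  field_simp
  linarith [this]

lemma betaMeasure_apply (a b : ℝ) {s : Set ℝ} (hs : MeasurableSet s) :
    _root_.betaMeasure a b s = ∫⁻ x in s, ENNReal.ofReal (_root_.betaPDFReal a b x) := by
  rw [_root_.betaMeasure, withDensity_apply _ hs]

lemma betaMeasure_compl_Ioo (a b : ℝ) : _root_.betaMeasure a b (Set.Ioo 0 1)ᶜ = 0 := by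
  rw [betaMeasure_apply a b measurableSet_Ioo.compl]
  rw [setLIntegral_congr_fun measurableSet_Ioo.compl
    (fun x hx => ?_), lintegral_zero]
  have : ¬ (0 < x ∧ x < 1) := by simpa [Set.mem_Ioo] using hx
  simp [_root_.betaPDFReal, this]

lemma ae_mem_Ioo_betaMeasure (a b : ℝ) : ∀ᵐ x ∂(_root_.betaMeasure a b), x ∈ Set.Ioo (0:ℝ) 1 := by
  rw [Filter.eventually_iff, mem_ae_iff]
  exact betaMeasure_compl_Ioo a b

lemma betaMeasure_Ioo {a b : ℝ} (ha : 0 < a) (hb : 0 < b) :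
    _root_.betaMeasure a b (Set.Ioo 0 1) = 1 := by
  rw [betaMeasure_apply a b measurableSet_Ioo]
  have hcong : ∀ x ∈ Set.Ioo (0:ℝ) 1, ENNReal.ofReal (_root_.betaPDFReal a b x)
      = ENNReal.ofReal ((Real.Gamma (a + b) / (Real.Gamma a * Real.Gamma b)) *
        (x ^ (a - 1) * (1 - x) ^ (b - 1))) := by
    intro x hx
    rw [_root_.betaPDFReal, if_pos (by exact hx), mul_assoc]
  rw [setLIntegral_congr_fun measurableSet_Ioo hcong]
  have hint : IntegrableOn (fun x : ℝ => (Real.Gamma (a + b) / (Real.Gamma a * Real.Gamma b)) *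
      (x ^ (a - 1) * (1 - x) ^ (b - 1))) (Set.Ioo 0 1) := by
    have := (betaIntegrand_intervalIntegrable ha hb).1
    exact ((this.mono_set Set.Ioo_subset_Ioc_self).const_mul _)
  rw [← ofReal_integral_eq_lintegral_ofReal hint]
  · have h1 : ∫ x in Set.Ioo (0:ℝ) 1, (Real.Gamma (a + b) / (Real.Gamma a * Real.Gamma b)) *
        (x ^ (a - 1) * (1 - x) ^ (b - 1))
        = (Real.Gamma (a + b) / (Real.Gamma a * Real.Gamma b)) *
          ∫ x in (0:ℝ)..1, x ^ (a - 1) * (1 - x) ^ (b - 1) := by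
      rw [intervalIntegral.integral_of_le (by norm_num), ← integral_Ioc_eq_integral_Ioo,
        integral_const_mul]
    rw [h1, integral_betaIntegrand ha hb]
    have hG : Real.Gamma (a + b) ≠ 0 := (Real.Gamma_pos_of_pos (add_pos ha hb)).ne'
    have hGa : Real.Gamma a ≠ 0 := (Real.Gamma_pos_of_pos ha).ne'
    have hGb : Real.Gamma b ≠ 0 := (Real.Gamma_pos_of_pos hb).ne'
    rw [div_mul_div_comm, mul_comm (Real.Gamma (a+b)), div_self (by positivity), ENNReal.ofReal_one]
  · refine (ae_restrict_iff' measurableSet_Ioo).2 (ae_of_all _ fun x hx => ?_)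
    have h1 := Real.Gamma_pos_of_pos ha
    have h2 := Real.Gamma_pos_of_pos hb
    have h3 := Real.Gamma_pos_of_pos (add_pos ha hb)
    have := Real.rpow_nonneg hx.1.le (a - 1)
    have := Real.rpow_nonneg (by linarith [hx.2] : (0:ℝ) ≤ 1 - x) (b - 1)
    positivity

lemma isProbabilityMeasure_betaMeasure {a b : ℝ} (ha : 0 < a) (hb : 0 < b) :
    IsProbabilityMeasure (_root_.betaMeasure a b) := by
  constructor
  have := measure_union_le (μ := _root_.betaMeasure a b) (Set.Ioo 0 1) (Set.Ioo 0 1)ᶜ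
  have h1 : _root_.betaMeasure a b Set.univ ≤ 1 := by
    rw [← Set.union_compl_self (Set.Ioo (0:ℝ) 1)] at *
    calc _root_.betaMeasure a b (Set.Ioo 0 1 ∪ (Set.Ioo 0 1)ᶜ)
        ≤ _root_.betaMeasure a b (Set.Ioo 0 1) + _root_.betaMeasure a b (Set.Ioo 0 1)ᶜ := this
      _ = 1 := by rw [betaMeasure_Ioo ha hb, betaMeasure_compl_Ioo, add_zero]
  have h2 : (1 : ENNReal) ≤ _root_.betaMeasure a b Set.univ := by
    rw [← betaMeasure_Ioo ha hb]
    exact measure_mono (Set.subset_univ _)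
  exact le_antisymm h1 h2

lemma betaMeasure_singleton (a b x : ℝ) : _root_.betaMeasure a b {x} = 0 :=
  withDensity_absolutelyContinuous volume _ (measure_singleton x)

lemma one_sub_rpow_intervalIntegrable {b : ℝ} (hb : 0 < b) {u : ℝ} (hu0 : 0 ≤ u) (hu1 : u ≤ 1) :
    IntervalIntegrable (fun x : ℝ => (1 - x) ^ (b - 1)) volume 0 u := by
  have h := betaIntegrand_intervalIntegrable one_pos hb
  simp only [sub_self, Real.rpow_zero, one_mul] at h
  exact h.mono_set (Set.uIcc_subset_uIcc_iff_le.2 (by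
    constructor <;> [skip; skip] <;>
      simp [Set.uIcc_of_le, hu0, hu1, min_le_min, le_refl] <;> norm_num))

lemma integral_one_sub_rpow {b : ℝ} (hb : 0 < b) (u : ℝ) :
    ∫ x in (0:ℝ)..u, b * (1 - x) ^ (b - 1) = 1 - (1 - u) ^ b := by
  rw [intervalIntegral.integral_const_mul]
  have h1 : (∫ x in (0:ℝ)..u, (1 - x) ^ (b - 1)) = ∫ x in (1-u)..(1-0), x ^ (b - 1) :=
    intervalIntegral.integral_comp_sub_left (fun x => x ^ (b - 1)) 1
  rw [h1, integral_rpow (Or.inl (by linarith))]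
  have : b - 1 + 1 = b := by ring
  rw [this, sub_zero, Real.one_rpow]
  field_simp

lemma betaMeasure_one_Iic {b : ℝ} (hb : 0 < b) (t : ℝ) :
    _root_.betaMeasure 1 b (Set.Iic t) = ENNReal.ofReal (1 - (1 - min t 1) ^ b) := by
  rcases le_or_gt t 0 with ht | ht
  · have hL : _root_.betaMeasure 1 b (Set.Iic t) = 0 := by
      refine measure_mono_null (fun x hx => ?_) (betaMeasure_compl_Ioo 1 b)
      simp only [Set.mem_Iic] at hx
      simp only [Set.mem_compl_iff, Set.mem_Ioo, not_and, not_lt]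
      intro h0; linarith
    rw [hL, min_eq_left (by linarith)]
    have h1 : (1:ℝ) ≤ (1 - t) ^ b := by
      calc (1:ℝ) = 1 ^ b := (Real.one_rpow b).symm
        _ ≤ (1 - t) ^ b := Real.rpow_le_rpow (by norm_num) (by linarith) hb.le
    rw [ENNReal.ofReal_eq_zero.2 (by linarith)]
  · set u := min t 1 with hu
    have hu0 : 0 < u := lt_min ht one_pos
    have hu1 : u ≤ 1 := min_le_right _ _
    have hkey : _root_.betaMeasure 1 b (Set.Iic t) = _root_.betaMeasure 1 b (Set.Ioo 0 u) := by
      refine le_antisymm ?_ (measure_mono (fun x hx => le_trans hx.2.le (min_le_left _ _)))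
      calc _root_.betaMeasure 1 b (Set.Iic t)
          = _root_.betaMeasure 1 b (Set.Iic t ∩ Set.Ioo 0 1) +
            _root_.betaMeasure 1 b (Set.Iic t \ Set.Ioo 0 1) :=
            (measure_inter_add_diff _ measurableSet_Ioo).symm
        _ ≤ _root_.betaMeasure 1 b (Set.Ioo 0 u ∪ {u}) + 0 := by
            gcongr
            · intro x hx
              rcases eq_or_lt_of_le (le_min hx.1 hx.2.2.le : x ≤ u) with h | h
              · exact Or.inr h
              · exact Or.inl ⟨hx.2.1, h⟩
            · exact le_of_eq (measure_mono_null (Set.diff_subset_compl _ _) (betaMeasure_compl_Ioo 1 b))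
        _ ≤ _root_.betaMeasure 1 b (Set.Ioo 0 u) + _root_.betaMeasure 1 b {u} + 0 := by
            gcongr; exact measure_union_le _ _
        _ = _root_.betaMeasure 1 b (Set.Ioo 0 u) := by
            rw [betaMeasure_singleton, add_zero, add_zero]
    rw [hkey, betaMeasure_apply _ _ measurableSet_Ioo]
    have hcong : ∀ x ∈ Set.Ioo (0:ℝ) u, ENNReal.ofReal (_root_.betaPDFReal 1 b x)
        = ENNReal.ofReal (b * (1 - x) ^ (b - 1)) := by
      intro x hx
      have hx1 : x < 1 := lt_of_lt_of_le hx.2 hu1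
      rw [_root_.betaPDFReal, if_pos ⟨hx.1, hx1⟩]
      rw [Real.Gamma_one, add_comm, Real.Gamma_add_one hb.ne', sub_self, Real.rpow_zero]
      congr 1
      rw [one_mul, mul_div_assoc, div_self (Real.Gamma_pos_of_pos hb).ne', mul_one, mul_one]
    rw [setLIntegral_congr_fun measurableSet_Ioo hcong]
    have hint : IntegrableOn (fun x : ℝ => b * (1 - x) ^ (b - 1)) (Set.Ioo 0 u) := by
      have := (one_sub_rpow_intervalIntegrable hb hu0.le hu1).1
      rw [← intervalIntegrable_iff_integrableOn_Ioo_of_le hu0.le] at *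
      exact ((one_sub_rpow_intervalIntegrable hb hu0.le hu1).const_mul b).mono_set
        (le_refl _)
    rw [← ofReal_integral_eq_lintegral_ofReal hint]
    · congr 1
      rw [← integral_Ioc_eq_integral_Ioo, ← intervalIntegral.integral_of_le hu0.le,
        integral_one_sub_rpow hb u]
    · refine (ae_restrict_iff' measurableSet_Ioo).2 (ae_of_all _ fun x hx => ?_)
      have : (0:ℝ) ≤ 1 - x := by linarith [lt_of_lt_of_le hx.2 hu1]
      have := Real.rpow_nonneg this (b - 1)
      positivity

lemma shifted_intervalIntegrable {α1 α2 t : ℝ} (h1 : 0 < α1) (h2 : 0 < α2)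
    (ht0 : 0 ≤ t) (ht1 : t < 1) :
    IntervalIntegrable (fun y : ℝ => (y - t) ^ α1 * (1 - y) ^ (α2 - 1)) volume t 1 := by
  have hbase : IntervalIntegrable (fun y : ℝ => (1 - y) ^ (α2 - 1)) volume t 1 := by
    have h := betaIntegrand_intervalIntegrable one_pos h2
    simp only [sub_self, Real.rpow_zero, one_mul] at h
    exact h.mono_set (by
      rw [Set.uIcc_of_le (by norm_num : (0:ℝ) ≤ 1), Set.uIcc_of_le ht1.le]
      exact Set.Icc_subset_Icc ht0 (le_refl _))
  refine hbase.mono_fun ?_ ?_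
  · exact (((measurable_id.sub measurable_const).pow_const _).mul
      ((measurable_const.sub measurable_id).pow_const _)).aestronglyMeasurable
  · rw [Set.uIoc_of_le ht1.le]
    refine (ae_restrict_iff' measurableSet_Ioc).2 (ae_of_all _ fun y hy => ?_)
    have hyt : 0 ≤ y - t := by linarith [hy.1]
    have hy1 : 0 ≤ 1 - y := by linarith [hy.2]
    simp only [Real.norm_eq_abs]
    rw [abs_of_nonneg (mul_nonneg (Real.rpow_nonneg hyt _) (Real.rpow_nonneg hy1 _)),
      abs_of_nonneg (Real.rpow_nonneg hy1 _)]
    have hle : (y - t) ^ α1 ≤ 1 := by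
      calc (y - t) ^ α1 ≤ 1 ^ α1 :=
            Real.rpow_le_rpow hyt (by linarith [hy.2, ht0]) h1.le
        _ = 1 := Real.one_rpow _
    nlinarith [Real.rpow_nonneg hy1 (α2 - 1), Real.rpow_nonneg hyt α1]

lemma shifted_integral {α1 α2 t : ℝ} (h1 : 0 < α1) (h2 : 0 < α2) (ht0 : 0 ≤ t) (ht1 : t < 1) :
    ∫ y in t..(1:ℝ), (y - t) ^ α1 * (1 - y) ^ (α2 - 1)
      = (1 - t) ^ (α1 + α2) * ∫ u in (0:ℝ)..1, u ^ α1 * (1 - u) ^ (α2 - 1) := by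
  have hc : (1:ℝ) - t ≠ 0 := by linarith
  have hcpos : (0:ℝ) < 1 - t := by linarith
  have key := intervalIntegral.integral_comp_mul_add
    (fun y : ℝ => (y - t) ^ α1 * (1 - y) ^ (α2 - 1)) hc t (a := 0) (b := 1)
  simp only [mul_zero, zero_add, mul_one] at key
  have hsub : ((1:ℝ) - t) + t = 1 := by ring
  rw [hsub] at key
  have hL : (∫ x in (0:ℝ)..1, ((1 - t) * x + t - t) ^ α1 * (1 - ((1 - t) * x + t)) ^ (α2 - 1))
      = (1 - t) ^ α1 * (1 - t) ^ (α2 - 1) * ∫ u in (0:ℝ)..1, u ^ α1 * (1 - u) ^ (α2 - 1) := by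
    rw [← intervalIntegral.integral_const_mul]
    refine intervalIntegral.integral_congr fun x hx => ?_
    rw [Set.uIcc_of_le (by norm_num : (0:ℝ) ≤ 1)] at hx
    have hx0 : 0 ≤ x := hx.1
    have hx1 : 0 ≤ 1 - x := by linarith [hx.2]
    have e1 : (1 - t) * x + t - t = (1 - t) * x := by ring
    have e2 : 1 - ((1 - t) * x + t) = (1 - t) * (1 - x) := by ring
    rw [e1, e2, Real.mul_rpow hcpos.le hx0, Real.mul_rpow hcpos.le hx1]
    ring
  rw [hL, smul_eq_mul] at key
  have hpow : (1 - t) ^ (α1 + α2) = (1 - t) * ((1 - t) ^ α1 * (1 - t) ^ (α2 - 1)) := by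
    rw [show α1 + α2 = α1 + (α2 - 1) + 1 by ring, Real.rpow_add hcpos, Real.rpow_add hcpos,
      Real.rpow_one]
    ring
  rw [hpow]
  field_simp at key
  linarith [key]

lemma beta_const_mul_B {α1 α2 : ℝ} (h1 : 0 < α1) (h2 : 0 < α2) :
    (Real.Gamma (1 + α1 + α2) / (Real.Gamma (1 + α1) * Real.Gamma α2)) *
      (Real.Gamma (1 + α1) * Real.Gamma α2 / Real.Gamma (1 + α1 + α2)) = 1 := by
  have hG : Real.Gamma (1 + α1 + α2) ≠ 0 :=
    (Real.Gamma_pos_of_pos (by linarith : (0:ℝ) < 1 + α1 + α2)).ne'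
  have hGa : Real.Gamma (1 + α1) ≠ 0 :=
    (Real.Gamma_pos_of_pos (by linarith : (0:ℝ) < 1 + α1)).ne'
  have hGb : Real.Gamma α2 ≠ 0 := (Real.Gamma_pos_of_pos h2).ne'
  field_simp

lemma B0_eq {α1 α2 : ℝ} (h1 : 0 < α1) (h2 : 0 < α2) :
    ∫ u in (0:ℝ)..1, u ^ α1 * (1 - u) ^ (α2 - 1)
      = Real.Gamma (1 + α1) * Real.Gamma α2 / Real.Gamma (1 + α1 + α2) := by
  have h := integral_betaIntegrand (a := 1 + α1) (b := α2) (by linarith) h2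
  simpa [add_sub_cancel_left] using h

lemma pdf2_intervalIntegrable {α1 α2 : ℝ} (h1 : 0 < α1) (h2 : 0 < α2) :
    IntervalIntegrable (fun y : ℝ =>
      (Real.Gamma (1 + α1 + α2) / (Real.Gamma (1 + α1) * Real.Gamma α2)) *
        (y ^ α1 * (1 - y) ^ (α2 - 1))) volume 0 1 := by
  have h := betaIntegrand_intervalIntegrable (a := 1 + α1) (b := α2) (by linarith) h2
  simp only [add_sub_cancel_left] at h
  exact h.const_mul _

lemma main_real_integral {α1 α2 t : ℝ} (h1 : 0 < α1) (h2 : 0 < α2)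
    (ht0 : 0 ≤ t) (ht1 : t < 1) :
    ∫ y in Set.Ioo (0:ℝ) 1,
      ((Real.Gamma (1 + α1 + α2) / (Real.Gamma (1 + α1) * Real.Gamma α2)) *
        (y ^ α1 * (1 - y) ^ (α2 - 1))) * (1 - (1 - min (t / y) 1) ^ α1)
      = 1 - (1 - t) ^ (α1 + α2) := by
  set C := Real.Gamma (1 + α1 + α2) / (Real.Gamma (1 + α1) * Real.Gamma α2) with hC
  set f : ℝ → ℝ := fun y => C * (y ^ α1 * (1 - y) ^ (α2 - 1)) with hf
  set H : ℝ → ℝ := fun y => f y * (1 - (1 - min (t / y) 1) ^ α1) with hH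
  have hfint : IntervalIntegrable f volume 0 1 := pdf2_intervalIntegrable h1 h2
  -- split the domain
  have hsplit : Set.Ioo (0:ℝ) 1 = Set.Ioc 0 t ∪ Set.Ioo t 1 := by
    ext y
    simp only [Set.mem_Ioo, Set.mem_union, Set.mem_Ioc]
    constructor
    · rintro ⟨hy0, hy1⟩
      rcases le_or_gt y t with h | h
      · exact Or.inl ⟨hy0, h⟩
      · exact Or.inr ⟨h, hy1⟩
    · rintro (⟨hy0, hy⟩ | ⟨hy, hy1⟩)
      · exact ⟨hy0, lt_of_le_of_lt hy ht1⟩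
      · exact ⟨lt_of_le_of_lt ht0 hy, hy1⟩
  have hdisj : Disjoint (Set.Ioc (0:ℝ) t) (Set.Ioo t 1) :=
    Set.disjoint_left.2 (fun y hy1 hy2 => absurd hy1.2 (not_le.2 hy2.1))
  have hHm : Measurable H := by
    refine Measurable.mul ?_ ?_
    · exact (((measurable_id.pow_const _).mul
        ((measurable_const.sub measurable_id).pow_const _)).const_mul _)
    · exact measurable_const.sub
        (((measurable_const.sub ((measurable_inv.const_mul t).min measurable_const)).pow_const _))
  have hHbound : ∀ y ∈ Set.Ioc (0:ℝ) 1, ‖H y‖ ≤ f y := by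
    intro y hy
    have hy0 : 0 < y := hy.1
    have hy1 : y ≤ 1 := hy.2
    have hfnn : 0 ≤ f y := by
      have hGpos := Real.Gamma_pos_of_pos (by linarith : (0:ℝ) < 1 + α1 + α2)
      have hGa := Real.Gamma_pos_of_pos (by linarith : (0:ℝ) < 1 + α1)
      have hGb := Real.Gamma_pos_of_pos h2
      have := Real.rpow_nonneg hy0.le α1
      have := Real.rpow_nonneg (by linarith : (0:ℝ) ≤ 1 - y) (α2 - 1)
      have hCpos : 0 < C := by rw [hC]; positivity
      positivity
    have hgb : |1 - (1 - min (t / y) 1) ^ α1| ≤ 1 := by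
      have hmin0 : 0 ≤ min (t / y) 1 := le_min (div_nonneg ht0 hy0.le) zero_le_one
      have hmin1 : min (t / y) 1 ≤ 1 := min_le_right _ _
      have h0 : 0 ≤ (1 - min (t / y) 1) ^ α1 := Real.rpow_nonneg (by linarith) _
      have hle : (1 - min (t / y) 1) ^ α1 ≤ 1 := by
        calc (1 - min (t / y) 1) ^ α1 ≤ 1 ^ α1 :=
              Real.rpow_le_rpow (by linarith) (by linarith) h1.le
          _ = 1 := Real.one_rpow _
      rw [abs_le]; constructor <;> linarith
    have habs : |H y| = |f y| * |1 - (1 - min (t / y) 1) ^ α1| := abs_mul _ _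
    rw [Real.norm_eq_abs, habs, abs_of_nonneg hfnn]
    calc f y * |1 - (1 - min (t / y) 1) ^ α1| ≤ f y * 1 :=
          mul_le_mul_of_nonneg_left hgb hfnn
      _ = f y := mul_one _
  have hHint : IntegrableOn H (Set.Ioc 0 1) :=
    hfint.1.mono' hHm.aestronglyMeasurable
      ((ae_restrict_iff' measurableSet_Ioc).2 (ae_of_all _ hHbound))
  have hHint1 : IntegrableOn H (Set.Ioc 0 t) :=
    hHint.mono_set (Set.Ioc_subset_Ioc (le_refl _) ht1.le)
  have hHint2 : IntegrableOn H (Set.Ioo t 1) :=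
    hHint.mono_set (fun y hy => ⟨lt_of_le_of_lt ht0 hy.1, hy.2.le⟩)
  rw [show (∫ y in Set.Ioo (0:ℝ) 1,
      ((Real.Gamma (1 + α1 + α2) / (Real.Gamma (1 + α1) * Real.Gamma α2)) *
        (y ^ α1 * (1 - y) ^ (α2 - 1))) * (1 - (1 - min (t / y) 1) ^ α1))
      = ∫ y in Set.Ioo (0:ℝ) 1, H y from rfl]
  rw [hsplit, setIntegral_union hdisj measurableSet_Ioo hHint1 hHint2]
  have hA : ∫ y in Set.Ioc (0:ℝ) t, H y = ∫ y in (0:ℝ)..t, f y := by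
    rw [intervalIntegral.integral_of_le ht0]
    refine setIntegral_congr_fun measurableSet_Ioc fun y hy => ?_
    have hy0 : 0 < y := hy.1
    have hmin : min (t / y) 1 = 1 := min_eq_right ((one_le_div hy0).2 hy.2)
    show f y * (1 - (1 - min (t / y) 1) ^ α1) = f y
    rw [hmin, sub_self, Real.zero_rpow h1.ne', sub_zero, mul_one]
  have hft1 : IntervalIntegrable f volume t 1 := hfint.mono_set (by
    rw [Set.uIcc_of_le ht1.le, Set.uIcc_of_le (by norm_num : (0:ℝ) ≤ 1)]
    exact Set.Icc_subset_Icc ht0 (le_refl _))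
  have hf0t : IntervalIntegrable f volume 0 t := hfint.mono_set (by
    rw [Set.uIcc_of_le ht0, Set.uIcc_of_le (by norm_num : (0:ℝ) ≤ 1)]
    exact Set.Icc_subset_Icc (le_refl _) ht1.le)
  have hB : ∫ y in Set.Ioo t 1, H y
      = (∫ y in t..1, f y) - C * ∫ y in t..(1:ℝ), (y - t) ^ α1 * (1 - y) ^ (α2 - 1) := by
    have hcong : ∀ y ∈ Set.Ioo t 1, H y = f y - C * ((y - t) ^ α1 * (1 - y) ^ (α2 - 1)) := by
      intro y hy
      have hy0 : 0 < y := lt_of_le_of_lt ht0 hy.1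
      have hty : t < y := hy.1
      have hmin : min (t / y) 1 = t / y := min_eq_left ((div_le_one hy0).2 hty.le)
      have hrw : (1 : ℝ) - t / y = (y - t) / y := by field_simp
      show f y * (1 - (1 - min (t / y) 1) ^ α1) = _
      rw [hmin, hrw, Real.div_rpow (by linarith) hy0.le]
      have hyne : y ^ α1 ≠ 0 := (Real.rpow_pos_of_pos hy0 _).ne'
      rw [hf]
      field_simp
    rw [setIntegral_congr_fun measurableSet_Ioo hcong, ← integral_Ioc_eq_integral_Ioo,
      ← intervalIntegral.integral_of_le ht1.le,
      intervalIntegral.integral_sub hft1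
        ((shifted_intervalIntegrable h1 h2 ht0 ht1).const_mul C)]
    congr 1
    exact intervalIntegral.integral_const_mul C _
  rw [hA, hB]
  have hadj : (∫ y in (0:ℝ)..t, f y) + (∫ y in t..1, f y) = ∫ y in (0:ℝ)..1, f y :=
    intervalIntegral.integral_add_adjacent_intervals hf0t hft1
  have hf01 : ∫ y in (0:ℝ)..1, f y = 1 := by
    show (∫ y in (0:ℝ)..1, C * (y ^ α1 * (1 - y) ^ (α2 - 1))) = 1
    rw [intervalIntegral.integral_const_mul, B0_eq h1 h2]
    exact beta_const_mul_B h1 h2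
  have hJ := shifted_integral h1 h2 ht0 ht1
  rw [hJ, B0_eq h1 h2]
  have hCB : C * (Real.Gamma (1 + α1) * Real.Gamma α2 / Real.Gamma (1 + α1 + α2)) = 1 :=
    beta_const_mul_B h1 h2
  have hX : C * ((1 - t) ^ (α1 + α2) *
      (Real.Gamma (1 + α1) * Real.Gamma α2 / Real.Gamma (1 + α1 + α2))) = (1 - t) ^ (α1 + α2) := by
    rw [mul_comm ((1 - t) ^ (α1 + α2)), ← mul_assoc, hCB, one_mul]
  rw [hX]
  linarith [hadj, hf01]

lemma H_integrableOn {α1 α2 t : ℝ} (h1 : 0 < α1) (h2 : 0 < α2) (ht0 : 0 ≤ t) :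
    IntegrableOn (fun y : ℝ =>
      ((Real.Gamma (1 + α1 + α2) / (Real.Gamma (1 + α1) * Real.Gamma α2)) *
        (y ^ α1 * (1 - y) ^ (α2 - 1))) * (1 - (1 - min (t / y) 1) ^ α1)) (Set.Ioc 0 1) := by
  set C := Real.Gamma (1 + α1 + α2) / (Real.Gamma (1 + α1) * Real.Gamma α2) with hC
  set f : ℝ → ℝ := fun y => C * (y ^ α1 * (1 - y) ^ (α2 - 1)) with hf
  set H : ℝ → ℝ := fun y => f y * (1 - (1 - min (t / y) 1) ^ α1) with hH
  have hfint : IntervalIntegrable f volume 0 1 := pdf2_intervalIntegrable h1 h2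
  have hHm : Measurable H := by
    refine Measurable.mul ?_ ?_
    · exact (((measurable_id.pow_const _).mul
        ((measurable_const.sub measurable_id).pow_const _)).const_mul _)
    · exact measurable_const.sub
        (((measurable_const.sub ((measurable_inv.const_mul t).min measurable_const)).pow_const _))
  have hHbound : ∀ y ∈ Set.Ioc (0:ℝ) 1, ‖H y‖ ≤ f y := by
    intro y hy
    have hy0 : 0 < y := hy.1
    have hy1 : y ≤ 1 := hy.2
    have hfnn : 0 ≤ f y := by
      have hGpos := Real.Gamma_pos_of_pos (by linarith : (0:ℝ) < 1 + α1 + α2)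
      have hGa := Real.Gamma_pos_of_pos (by linarith : (0:ℝ) < 1 + α1)
      have hGb := Real.Gamma_pos_of_pos h2
      have := Real.rpow_nonneg hy0.le α1
      have := Real.rpow_nonneg (by linarith : (0:ℝ) ≤ 1 - y) (α2 - 1)
      have hCpos : 0 < C := by rw [hC]; positivity
      positivity
    have hgb : |1 - (1 - min (t / y) 1) ^ α1| ≤ 1 := by
      have hmin0 : 0 ≤ min (t / y) 1 := le_min (div_nonneg ht0 hy0.le) zero_le_one
      have hmin1 : min (t / y) 1 ≤ 1 := min_le_right _ _
      have h0 : 0 ≤ (1 - min (t / y) 1) ^ α1 := Real.rpow_nonneg (by linarith) _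
      have hle : (1 - min (t / y) 1) ^ α1 ≤ 1 := by
        calc (1 - min (t / y) 1) ^ α1 ≤ 1 ^ α1 :=
              Real.rpow_le_rpow (by linarith) (by linarith) h1.le
          _ = 1 := Real.one_rpow _
      rw [abs_le]; constructor <;> linarith
    have habs : |H y| = |f y| * |1 - (1 - min (t / y) 1) ^ α1| := abs_mul _ _
    rw [Real.norm_eq_abs, habs, abs_of_nonneg hfnn]
    calc f y * |1 - (1 - min (t / y) 1) ^ α1| ≤ f y * 1 :=
          mul_le_mul_of_nonneg_left hgb hfnn
      _ = f y := mul_one _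
  exact hfint.1.mono' hHm.aestronglyMeasurable
    ((ae_restrict_iff' measurableSet_Ioc).2 (ae_of_all _ hHbound))

lemma prod_mul_Iic {α1 α2 : ℝ} (h1 : 0 < α1) (h2 : 0 < α2) (t : ℝ) :
    ((_root_.betaMeasure 1 α1).prod (_root_.betaMeasure (1 + α1) α2)) {p : ℝ × ℝ | p.1 * p.2 ≤ t}
      = ENNReal.ofReal (1 - (1 - min t 1) ^ (α1 + α2)) := by
  have h1' : (0:ℝ) < 1 + α1 := by linarith
  haveI i1 : IsProbabilityMeasure (_root_.betaMeasure 1 α1) :=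
    isProbabilityMeasure_betaMeasure one_pos h1
  haveI i2 : IsProbabilityMeasure (_root_.betaMeasure (1 + α1) α2) :=
    isProbabilityMeasure_betaMeasure h1' h2
  have hS : MeasurableSet {p : ℝ × ℝ | p.1 * p.2 ≤ t} :=
    measurableSet_le (measurable_fst.mul measurable_snd) measurable_const
  have hcomplnull : ((_root_.betaMeasure 1 α1).prod (_root_.betaMeasure (1 + α1) α2))
      ((Set.Ioo (0:ℝ) 1 ×ˢ Set.Ioo (0:ℝ) 1)ᶜ) = 0 := by
    rw [Set.compl_prod_eq_union]
    refine measure_union_null ?_ ?_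
    · rw [Measure.prod_prod, betaMeasure_compl_Ioo, zero_mul]
    · rw [Measure.prod_prod, betaMeasure_compl_Ioo, mul_zero]
  rcases lt_or_ge t 0 with ht | ht0
  · have hL : ((_root_.betaMeasure 1 α1).prod (_root_.betaMeasure (1 + α1) α2))
        {p : ℝ × ℝ | p.1 * p.2 ≤ t} = 0 := by
      refine measure_mono_null (fun p hp => ?_) hcomplnull
      simp only [Set.mem_setOf_eq] at hp
      rw [Set.mem_compl_iff]
      intro hmem
      have : 0 < p.1 * p.2 := mul_pos hmem.1.1 hmem.2.1
      linarith
    rw [hL, min_eq_left (by linarith)]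
    have hone : (1:ℝ) ≤ (1 - t) ^ (α1 + α2) := by
      calc (1:ℝ) = 1 ^ (α1 + α2) := (Real.one_rpow _).symm
        _ ≤ (1 - t) ^ (α1 + α2) :=
            Real.rpow_le_rpow (by norm_num) (by linarith) (by linarith)
    rw [ENNReal.ofReal_eq_zero.2 (by linarith)]
  rcases le_or_gt 1 t with ht1 | ht1
  · have hsub : Set.Ioo (0:ℝ) 1 ×ˢ Set.Ioo (0:ℝ) 1 ⊆ {p : ℝ × ℝ | p.1 * p.2 ≤ t} := by
      rintro ⟨x, y⟩ ⟨hx, hy⟩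
      simp only [Set.mem_setOf_eq]
      nlinarith [hx.1, hx.2, hy.1, hy.2]
    have hge : (1:ENNReal) ≤ ((_root_.betaMeasure 1 α1).prod (_root_.betaMeasure (1 + α1) α2))
        {p : ℝ × ℝ | p.1 * p.2 ≤ t} := by
      calc (1:ENNReal) = _root_.betaMeasure 1 α1 (Set.Ioo 0 1) *
            _root_.betaMeasure (1 + α1) α2 (Set.Ioo 0 1) := by
            rw [betaMeasure_Ioo one_pos h1, betaMeasure_Ioo h1' h2, one_mul]
        _ = ((_root_.betaMeasure 1 α1).prod (_root_.betaMeasure (1 + α1) α2))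
              (Set.Ioo (0:ℝ) 1 ×ˢ Set.Ioo (0:ℝ) 1) := (Measure.prod_prod _ _).symm
        _ ≤ _ := measure_mono hsub
    have hle := prob_le_one (μ := (_root_.betaMeasure 1 α1).prod (_root_.betaMeasure (1 + α1) α2))
      (s := {p : ℝ × ℝ | p.1 * p.2 ≤ t})
    rw [min_eq_right ht1, sub_self,
      Real.zero_rpow (by positivity : α1 + α2 ≠ 0), sub_zero, ENNReal.ofReal_one]
    exact le_antisymm hle hge
  · -- main case 0 ≤ t < 1
    rw [Measure.prod_apply_symm hS]
    have hae := ae_mem_Ioo_betaMeasure (1 + α1) α2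
    have hcong : ∀ᵐ y ∂(_root_.betaMeasure (1 + α1) α2),
        _root_.betaMeasure 1 α1 ((fun x => (x, y)) ⁻¹' {p : ℝ × ℝ | p.1 * p.2 ≤ t})
          = ENNReal.ofReal (1 - (1 - min (t / y) 1) ^ α1) := by
      filter_upwards [hae] with y hy
      have hpre : ((fun x => (x, y)) ⁻¹' {p : ℝ × ℝ | p.1 * p.2 ≤ t}) = Set.Iic (t / y) := by
        ext x
        simp only [Set.mem_preimage, Set.mem_setOf_eq, Set.mem_Iic]
        exact (le_div_iff₀ hy.1).symm
      rw [hpre, betaMeasure_one_Iic h1]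
    rw [lintegral_congr_ae hcong]
    set G : ℝ → ENNReal := fun y => ENNReal.ofReal (1 - (1 - min (t / y) 1) ^ α1) with hG
    have hGm : Measurable G :=
      (measurable_const.sub
        ((measurable_const.sub ((measurable_inv.const_mul t).min measurable_const)).pow_const _)).ennreal_ofReal
    rw [_root_.betaMeasure, lintegral_withDensity_eq_lintegral_mul volume
      (_root_.measurable_betaPDFReal _ _).ennreal_ofReal hGm]
    simp only [Pi.mul_apply]
    have hind : ∀ y, (fun y => ENNReal.ofReal (_root_.betaPDFReal (1 + α1) α2 y) * G y) y
        = Set.indicator (Set.Ioo 0 1)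
            (fun y => ENNReal.ofReal (_root_.betaPDFReal (1 + α1) α2 y) * G y) y := by
      intro y
      rcases em (y ∈ Set.Ioo (0:ℝ) 1) with h | h
      · rw [Set.indicator_of_mem h]
      · rw [Set.indicator_of_notMem h]
        have : _root_.betaPDFReal (1 + α1) α2 y = 0 := by
          rw [_root_.betaPDFReal, if_neg (by simpa [Set.mem_Ioo] using h)]
        simp [this]
    rw [lintegral_congr hind, lintegral_indicator measurableSet_Ioo _]
    have hcong2 : ∀ y ∈ Set.Ioo (0:ℝ) 1,
        ENNReal.ofReal (_root_.betaPDFReal (1 + α1) α2 y) * G y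
          = ENNReal.ofReal
            (((Real.Gamma (1 + α1 + α2) / (Real.Gamma (1 + α1) * Real.Gamma α2)) *
              (y ^ α1 * (1 - y) ^ (α2 - 1))) * (1 - (1 - min (t / y) 1) ^ α1)) := by
      intro y hy
      have hpdf : _root_.betaPDFReal (1 + α1) α2 y
          = (Real.Gamma (1 + α1 + α2) / (Real.Gamma (1 + α1) * Real.Gamma α2)) *
              (y ^ α1 * (1 - y) ^ (α2 - 1)) := by
        rw [_root_.betaPDFReal, if_pos (by exact hy)]
        rw [add_sub_cancel_left]
        ring
      have hfnn : 0 ≤ (Real.Gamma (1 + α1 + α2) / (Real.Gamma (1 + α1) * Real.Gamma α2)) *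
          (y ^ α1 * (1 - y) ^ (α2 - 1)) := by
        have hGpos := Real.Gamma_pos_of_pos (by linarith : (0:ℝ) < 1 + α1 + α2)
        have hGa := Real.Gamma_pos_of_pos h1'
        have hGb := Real.Gamma_pos_of_pos h2
        have := Real.rpow_nonneg hy.1.le α1
        have := Real.rpow_nonneg (by linarith [hy.2] : (0:ℝ) ≤ 1 - y) (α2 - 1)
        positivity
      rw [hpdf, hG, ← ENNReal.ofReal_mul hfnn]
    rw [setLIntegral_congr_fun measurableSet_Ioo hcong2]
    have hint : IntegrableOn (fun y : ℝ =>
        ((Real.Gamma (1 + α1 + α2) / (Real.Gamma (1 + α1) * Real.Gamma α2)) *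
          (y ^ α1 * (1 - y) ^ (α2 - 1))) * (1 - (1 - min (t / y) 1) ^ α1)) (Set.Ioo 0 1) :=
      (H_integrableOn h1 h2 ht0).mono_set Set.Ioo_subset_Ioc_self
    rw [← ofReal_integral_eq_lintegral_ofReal hint]
    · rw [main_real_integral h1 h2 ht0 ht1, min_eq_left ht1.le]
    · refine (ae_restrict_iff' measurableSet_Ioo).2 (ae_of_all _ fun y hy => ?_)
      have hy0 : 0 < y := hy.1
      have hfnn : 0 ≤ (Real.Gamma (1 + α1 + α2) / (Real.Gamma (1 + α1) * Real.Gamma α2)) *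
          (y ^ α1 * (1 - y) ^ (α2 - 1)) := by
        have hGpos := Real.Gamma_pos_of_pos (by linarith : (0:ℝ) < 1 + α1 + α2)
        have hGa := Real.Gamma_pos_of_pos h1'
        have hGb := Real.Gamma_pos_of_pos h2
        have := Real.rpow_nonneg hy0.le α1
        have := Real.rpow_nonneg (by linarith [hy.2] : (0:ℝ) ≤ 1 - y) (α2 - 1)
        positivity
      have hgnn : 0 ≤ 1 - (1 - min (t / y) 1) ^ α1 := by
        have hmin0 : 0 ≤ min (t / y) 1 := le_min (div_nonneg ht0 hy0.le) zero_le_one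
        have hmin1 : min (t / y) 1 ≤ 1 := min_le_right _ _
        have hle : (1 - min (t / y) 1) ^ α1 ≤ 1 := by
          calc (1 - min (t / y) 1) ^ α1 ≤ 1 ^ α1 :=
                Real.rpow_le_rpow (by linarith) (by linarith) h1.le
            _ = 1 := Real.one_rpow _
        linarith
      exact mul_nonneg hfnn hgnn

theorem betaProduct_H2_marginals {Ω : Type*} [MeasurableSpace Ω] (μ : Measure Ω)
    [IsProbabilityMeasure μ] (V0 V1 : Ω → ℝ) (α1 α2 : ℝ) (hα1 : 0 < α1) (hα2 : 0 < α2)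
    (h0 : HasBetaLaw μ V0 1 α1) (h1 : HasBetaLaw μ V1 (1 + α1) α2)
    (hind : IndepFun V0 V1 μ) :
    HasBetaLaw μ (fun ω => V0 ω * V1 ω) 1 (α1 + α2) ∧ HasBetaLaw μ V0 1 α1 := by
  obtain ⟨hm0, hl0⟩ := h0
  obtain ⟨hm1, hl1⟩ := h1
  refine ⟨⟨hm0.mul hm1, ?_⟩, hm0, hl0⟩
  have hpair : μ.map (fun ω => (V0 ω, V1 ω)) = (μ.map V0).prod (μ.map V1) :=
    (indepFun_iff_map_prod_eq_prod_map_map hm0.aemeasurable hm1.aemeasurable).mp hind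
  have hmm : μ.map (fun ω => V0 ω * V1 ω)
      = ((_root_.betaMeasure 1 α1).prod (_root_.betaMeasure (1 + α1) α2)).map
          (fun p : ℝ × ℝ => p.1 * p.2) := by
    rw [← hl0, ← hl1, ← hpair,
      Measure.map_map (g := fun p : ℝ × ℝ => p.1 * p.2) (measurable_fst.mul measurable_snd) (hm0.prodMk hm1)]
    rfl
  rw [hmm]
  haveI i1 : IsProbabilityMeasure (_root_.betaMeasure 1 α1) :=
    isProbabilityMeasure_betaMeasure one_pos hα1
  haveI i2 : IsProbabilityMeasure (_root_.betaMeasure (1 + α1) α2) :=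
    isProbabilityMeasure_betaMeasure (by linarith) hα2
  haveI : IsProbabilityMeasure (((_root_.betaMeasure 1 α1).prod (_root_.betaMeasure (1 + α1) α2)).map
      (fun p : ℝ × ℝ => p.1 * p.2)) :=
    Measure.isProbabilityMeasure_map (measurable_fst.mul measurable_snd).aemeasurable
  refine Measure.ext_of_Iic _ _ (fun a => ?_)
  rw [Measure.map_apply (f := fun p : ℝ × ℝ => p.1 * p.2) (measurable_fst.mul measurable_snd) measurableSet_Iic]
  have hpre : (fun p : ℝ × ℝ => p.1 * p.2) ⁻¹' Set.Iic a
      = {p : ℝ × ℝ | p.1 * p.2 ≤ a} := rfl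
  rw [hpre, prod_mul_Iic hα1 hα2 a, betaMeasure_one_Iic (by linarith : (0:ℝ) < α1 + α2) a]
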